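/- Let E_1, E_2, … ∈ {0,1} satisfy the deterministic envelope condition ∑_{t=k}^{k+τ} E_t < A·τ + ψ(τ) for all k ≥ 1 and τ ≥ 1, where A < (D − ε)/D_max and ψ : ℕ → [0, ∞) satisfies ψ(τ)/τ → 0 as τ → ∞. Let arrivals satisfy 0 ≤ a_t ≤ D_max·E_t, and let the queue be Q_0 = 0, Q_t = max{0, Q_{t−1} − (D − ε)} + a_t. Then τ_max = min{τ ∈ ℕ : ψ(τ)/τ ≤ (D − ε)/D_max − A} is finite, and the queue is uniformly bounded: sup_{t ≥ 0} Q_t < τ_max·(D_max − D + ε) + D − ε. (Queue-boundedness step in the proof of Theorem 3) -/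
import Mathlib


/-- **Queue-boundedness step in the proof of Theorem 3.**
Let `E_t ∈ {0,1}` satisfy the deterministic envelope condition
`∑_{t=k}^{k+τ} E_t < A τ + ψ(τ)` for all `k ≥ 1` and `τ ≥ 1`, with
`A < (D − ε)/D_max` and sublinear `ψ ≥ 0`. Let arrivals satisfy
`0 ≤ a_t ≤ D_max E_t` and let the queue be `Q_0 = 0`,
`Q_t = max{0, Q_{t−1} − (D − ε)} + a_t`. Then
`τ_max = min{τ ∈ ℕ, τ ≥ 1 : ψ(τ)/τ ≤ (D − ε)/D_max − A}` is finite (the set is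
nonempty) and `sup_{t ≥ 0} Q_t < τ_max (D_max − D + ε) + D − ε`. -/
theorem erasure_queue_uniformly_bounded
    (Dmax D ε : ℝ) (hDmax : 0 < Dmax) (hD : 0 < D ∧ D ≤ Dmax) (hε : 0 < ε ∧ ε < D)
    (A : ℝ) (hA : A < (D - ε) / Dmax)
    (ψ : ℕ → ℝ) (hψ0 : ∀ τ, 0 ≤ ψ τ)
    (hψsub : Filter.Tendsto (fun τ : ℕ => ψ τ / τ) Filter.atTop (nhds 0))
    (E : ℕ → ℝ) (hE : ∀ t, E t = 0 ∨ E t = 1)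
    (henv : ∀ k, 1 ≤ k → ∀ τ, 1 ≤ τ →
      ∑ t ∈ Finset.Icc k (k + τ), E t < A * τ + ψ τ)
    (a : ℕ → ℝ) (ha : ∀ t, 0 ≤ a t ∧ a t ≤ Dmax * E t)
    (Q : ℕ → ℝ) (hQ0 : Q 0 = 0)
    (hQ : ∀ t, 1 ≤ t → Q t = max 0 (Q (t - 1) - (D - ε)) + a t) :
    {τ : ℕ | 1 ≤ τ ∧ ψ τ / τ ≤ (D - ε) / Dmax - A}.Nonempty ∧
    ∀ t, Q t <
      (sInf {τ : ℕ | 1 ≤ τ ∧ ψ τ / τ ≤ (D - ε) / Dmax - A} : ℕ) * (Dmax - D + ε)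
        + (D - ε) := by
  obtain ⟨hD0, hDle⟩ := hD
  obtain ⟨hε0, hεD⟩ := hε
  set c : ℝ := D - ε with hc
  have hc0 : 0 < c := by rw [hc]; linarith
  have hcDmax : c < Dmax := by rw [hc]; linarith
  have hgap : 0 < c / Dmax - A := by linarith
  have hEnn : ∀ t, 0 ≤ E t := fun t => by rcases hE t with h | h <;> simp [h]
  have hE1 : ∀ t, E t ≤ 1 := fun t => by rcases hE t with h | h <;> simp [h]
  have hne : {τ : ℕ | 1 ≤ τ ∧ ψ τ / τ ≤ c / Dmax - A}.Nonempty := by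
    have h := hψsub.eventually_lt_const hgap
    obtain ⟨N, hN⟩ := Filter.eventually_atTop.mp h
    exact ⟨N + 1, by omega, (hN (N + 1) (by omega)).le⟩
  set S : Set ℕ := {τ : ℕ | 1 ≤ τ ∧ ψ τ / τ ≤ c / Dmax - A} with hS
  set τm : ℕ := sInf S with hτm
  have hmem : τm ∈ S := Nat.sInf_mem hne
  obtain ⟨h1m, hψm⟩ := hmem
  have hτmpos : (0:ℝ) < (τm:ℝ) := by exact_mod_cast h1m
  have hψm' : ψ τm ≤ (τm:ℝ) * (c / Dmax - A) := by
    rw [div_le_iff₀ hτmpos] at hψm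
    nlinarith [hψm]
  have henvc : ∀ k, 1 ≤ k → ∑ t ∈ Finset.Icc k (k + τm), E t < (τm:ℝ) * (c / Dmax) := by
    intro k hk
    have h := henv k hk τm h1m
    have hexp : (τm:ℝ) * (c / Dmax - A) = (τm:ℝ) * (c / Dmax) - (τm:ℝ) * A := by ring
    nlinarith [h, hψm']
  have hnatsum : ∀ F : Finset ℕ, ∃ n : ℕ, ∑ t ∈ F, E t = (n:ℝ) := by
    intro F
    induction F using Finset.induction_on with
    | empty => exact ⟨0, by simp⟩
    | @insert x F' hx ih =>
      obtain ⟨n, hn⟩ := ih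
      rcases hE x with h0 | h1
      · exact ⟨n, by rw [Finset.sum_insert hx, h0, hn]; ring⟩
      · exact ⟨n + 1, by rw [Finset.sum_insert hx, h1, hn]; push_cast; ring⟩
  have hEwin : ∀ k, 1 ≤ k → ∑ t ∈ Finset.Icc k (k + τm), E t ≤ (τm:ℝ) - 1 := by
    intro k hk
    obtain ⟨n, hn⟩ := hnatsum (Finset.Icc k (k + τm))
    have h1 := henvc k hk
    rw [hn] at h1 ⊢
    have hcd : c / Dmax < 1 := (div_lt_one hDmax).mpr hcDmax
    have h2 : (n:ℝ) < (τm:ℝ) := lt_of_lt_of_le h1 (by nlinarith)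
    have h3 : n < τm := by exact_mod_cast h2
    have h4 : (n:ℝ) + 1 ≤ (τm:ℝ) := by exact_mod_cast h3
    linarith
  have haE : ∀ F : Finset ℕ, ∑ u ∈ F, a u ≤ Dmax * ∑ u ∈ F, E u := by
    intro F
    rw [Finset.mul_sum]
    exact Finset.sum_le_sum fun i _ => (ha i).2
  have hBpos : (0:ℝ) < (τm:ℝ) * (Dmax - c) + c := by nlinarith [hτmpos]
  have hwin : ∀ τ : ℕ, ∀ s : ℕ, 1 ≤ s →
      ∑ u ∈ Finset.Icc s (s + τ), a u - (τ:ℝ) * c < (τm:ℝ) * (Dmax - c) + c := by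
    intro τ
    induction τ using Nat.strong_induction_on with
    | _ τ ih =>
    intro s hs
    rcases lt_trichotomy τ τm with hlt | heq | hgt
    · -- short window: τ < τm
      have hsub : ∑ u ∈ Finset.Icc s (s + τ), E u ≤ ∑ u ∈ Finset.Icc s (s + τm), E u :=
        Finset.sum_le_sum_of_subset_of_nonneg
          (Finset.Icc_subset_Icc_right (by omega)) (fun i _ _ => hEnn i)
      have hlen : ∑ u ∈ Finset.Icc s (s + τ), E u ≤ (τ:ℝ) + 1 := by
        calc ∑ u ∈ Finset.Icc s (s + τ), E u ≤ ∑ u ∈ Finset.Icc s (s + τ), (1:ℝ) :=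
              Finset.sum_le_sum fun i _ => hE1 i
          _ = (τ:ℝ) + 1 := by
              rw [Finset.sum_const, Nat.card_Icc]
              have h : s + τ + 1 - s = τ + 1 := by omega
              rw [h]; push_cast; ring
      have hX2 : ∑ u ∈ Finset.Icc s (s + τ), E u ≤ (τm:ℝ) - 1 := le_trans hsub (hEwin s hs)
      have hsa := haE (Finset.Icc s (s + τ))
      have hSEnn : (0:ℝ) ≤ ∑ u ∈ Finset.Icc s (s + τ), E u :=
        Finset.sum_nonneg fun i _ => hEnn i
      have hτlt : (τ:ℝ) + 1 ≤ (τm:ℝ) := by exact_mod_cast hlt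
      rcases le_or_gt ((τ:ℝ) + 1) ((τm:ℝ) - 1) with hc1 | hc2
      · nlinarith [mul_le_mul_of_nonneg_left hlen hDmax.le,
          mul_nonneg (by linarith : (0:ℝ) ≤ (τm:ℝ) - 2 - τ) (by linarith : (0:ℝ) ≤ Dmax - c)]
      · nlinarith [mul_le_mul_of_nonneg_left hX2 hDmax.le]
    · -- window of exactly the critical length
      have h2 := haE (Finset.Icc s (s + τ))
      rw [heq] at h2 ⊢
      have h3 : ∑ u ∈ Finset.Icc s (s + τm), a u < Dmax * ((τm:ℝ) * (c / Dmax)) :=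
        lt_of_le_of_lt h2 (mul_lt_mul_of_pos_left (henvc s hs) hDmax)
      have h4 : Dmax * ((τm:ℝ) * (c / Dmax)) = (τm:ℝ) * c := by field_simp
      rw [h4] at h3
      linarith
    · -- long window: split off a block of length τm + 1
      have hτeq : τ = τm + 1 + (τ - (τm + 1)) := by omega
      set τ' := τ - (τm + 1) with hτ'
      have hsplit : Finset.Icc s (s + τ) =
          Finset.Icc s (s + τm) ∪ Finset.Icc (s + τm + 1) (s + τ) := by
        ext x; simp only [Finset.mem_Icc, Finset.mem_union]; omega
      have hdisj : Disjoint (Finset.Icc s (s + τm)) (Finset.Icc (s + τm + 1) (s + τ)) := by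
        rw [Finset.disjoint_left]
        intro x hx hx'
        simp only [Finset.mem_Icc] at hx hx'
        omega
      have hsum : ∑ u ∈ Finset.Icc s (s + τ), a u =
          ∑ u ∈ Finset.Icc s (s + τm), a u + ∑ u ∈ Finset.Icc (s + τm + 1) (s + τ), a u := by
        rw [hsplit, Finset.sum_union hdisj]
      have h1 : ∑ u ∈ Finset.Icc s (s + τm), a u < (τm:ℝ) * c := by
        have h3 := lt_of_le_of_lt (haE (Finset.Icc s (s + τm)))
          (mul_lt_mul_of_pos_left (henvc s hs) hDmax)
        have h4 : Dmax * ((τm:ℝ) * (c / Dmax)) = (τm:ℝ) * c := by field_simp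
        rw [h4] at h3
        exact h3
      have hIH := ih τ' (by omega) (s + τm + 1) (by omega)
      have hidx : (s + τm + 1) + τ' = s + τ := by omega
      rw [hidx] at hIH
      have hcast : (τ:ℝ) = (τm:ℝ) + 1 + (τ':ℝ) := by exact_mod_cast hτeq
      rw [hsum, hcast]
      linarith
  have hrep : ∀ t : ℕ, 1 ≤ t → ∃ s, 1 ≤ s ∧ s ≤ t ∧
      Q t = ∑ u ∈ Finset.Icc s t, a u - ((t - s : ℕ) : ℝ) * c := by
    intro t
    induction t with
    | zero => intro h; exact absurd h (by omega)
    | succ n ihn =>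
      intro _
      have hq := hQ (n + 1) (by omega)
      rw [show n + 1 - 1 = n from rfl] at hq
      by_cases hn0 : n = 0
      · subst hn0
        refine ⟨1, le_refl 1, le_refl 1, ?_⟩
        rw [hq, hQ0]
        rw [max_eq_left (by linarith : (0:ℝ) - c ≤ 0)]
        simp
      · have hn1 : 1 ≤ n := by omega
        by_cases hle : Q n - c ≤ 0
        · refine ⟨n + 1, by omega, le_refl _, ?_⟩
          rw [hq, max_eq_left hle]
          simp
        · obtain ⟨s, hs1, hsn, hQn⟩ := ihn hn1
          refine ⟨s, hs1, by omega, ?_⟩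
          rw [hq, max_eq_right (le_of_lt (by linarith : (0:ℝ) < Q n - c)), hQn]
          rw [Finset.sum_Icc_succ_top (by omega : s ≤ n + 1)]
          have hc2 : ((n + 1 - s : ℕ) : ℝ) = ((n - s : ℕ) : ℝ) + 1 := by
            have h : n + 1 - s = (n - s) + 1 := by omega
            rw [h]; push_cast; ring
          rw [hc2]; ring
  refine ⟨hne, ?_⟩
  intro t
  have hrw : Dmax - D + ε = Dmax - c := by rw [hc]; ring
  rw [hrw]
  rcases Nat.eq_zero_or_pos t with h0 | h1
  · subst h0; rw [hQ0]; exact hBpos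
  · obtain ⟨s, hs1, hst, hQt⟩ := hrep t h1
    rw [hQt]
    have hw := hwin (t - s) s hs1
    rw [show s + (t - s) = t from by omega] at hw
    exact hw
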